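/- Let (P1, P2) ∈ Π(s1, t1) × Π(s2, t2) be a pair of shortest paths, and let (v, w) and (v', w') be two distinct concordant pairs for (P1, P2). Then the subpaths P1[v, w] and P1[v', w'] are vertex-disjoint, and the subpaths P2[v, w] and P2[v', w'] are vertex-disjoint. -/

import Mathlib

open scoped BigOperators

namespace DSP

variable {V : Type*} [Fintype V] [DecidableEq V]

/-- A path: a nonempty list of distinct vertices in which each consecutive
pair is joined by a directed edge. -/
def IsPath (E : V → V → Prop) (p : List V) : Prop :=
  p ≠ [] ∧ p.Nodup ∧ p.Chain' E

/-- A path from `x` to `y`. -/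
def IsPathFrom (E : V → V → Prop) (p : List V) (x y : V) : Prop :=
  IsPath E p ∧ p.head? = some x ∧ p.getLast? = some y

/-- The (ordered) list of edges of a path. -/
def pathEdges (p : List V) : List (V × V) := p.zip p.tail

/-- The weight of a path: the sum of its edge weights. -/
def pathWeight (ℓ : V → V → ℝ) (p : List V) : ℝ :=
  ((pathEdges p).map fun e => ℓ e.1 e.2).sum

/-- `dist x y` : the minimum weight of a path from `x` to `y`
(`⊤` if there is no such path). -/
noncomputable def dist (E : V → V → Prop) (ℓ : V → V → ℝ) (x y : V) : EReal :=
  sInf {w : EReal | ∃ p : List V, IsPathFrom E p x y ∧ (pathWeight ℓ p : EReal) = w}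

/-- A shortest path from `x` to `y` : a path from `x` to `y` whose weight
equals `dist x y`.  `Π(x, y)` is the set of all such paths. -/
def IsShortestPath (E : V → V → Prop) (ℓ : V → V → ℝ) (p : List V) (x y : V) : Prop :=
  IsPathFrom E p x y ∧ (pathWeight ℓ p : EReal) = dist E ℓ x y

/-- A directed cycle: a closed walk with at least one edge whose internal
vertices are pairwise distinct. -/
def IsCycle (E : V → V → Prop) (p : List V) : Prop :=
  2 ≤ p.length ∧ p.Chain' E ∧ p.head? = p.getLast? ∧ p.tail.Nodup

/-- `G` contains no directed cycle of negative or zero total weight. -/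
def NoNonposCycle (E : V → V → Prop) (ℓ : V → V → ℝ) : Prop :=
  ∀ p : List V, IsCycle E p → 0 < pathWeight ℓ p

/-- `G` is a DAG: it contains no directed cycle. -/
def Acyclic (E : V → V → Prop) : Prop :=
  ∀ p : List V, ¬ IsCycle E p

/-- `x` precedes `y` on the path `p` (`x = y` allowed). -/
def Precedes (p : List V) (x y : V) : Prop :=
  x ∈ p ∧ y ∈ p ∧ p.idxOf x ≤ p.idxOf y

/-- `subpath p x y` : the subpath `p[x, y]` of `p` from `x` to `y`
(for `x` preceding `y` on `p`). -/
def subpath (p : List V) (x y : V) : List V :=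
  (p.take (p.idxOf y + 1)).drop (p.idxOf x)

/-- Concatenation `p · q` of two paths (the last vertex of `p` coinciding
with the first vertex of `q`). -/
def pathConcat (p q : List V) : List V := p ++ q.tail

/-- A vertex is internal to a path if it lies on it and is not an endpoint. -/
def Internal (p : List V) (v : V) : Prop :=
  v ∈ p ∧ p.head? ≠ some v ∧ p.getLast? ≠ some v

/-- Paths `p1` from `x1` to `y1` and `p2` from `x2` to `y2` are internally
vertex-disjoint: they share no vertices except possibly those in
`{x1, y1} ∩ {x2, y2}`. -/
def InternallyDisjoint (p1 : List V) (x1 y1 : V) (p2 : List V) (x2 y2 : V) : Prop :=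
  ∀ u, u ∈ p1 → u ∈ p2 → u ∈ ({x1, y1} ∩ {x2, y2} : Set V)

/-- `(a, b)` is a twin-crossing pair for paths `p1`, `p2`. -/
def TwinCrossingPair (p1 p2 : List V) (a b : V) : Prop :=
  a ≠ b ∧ Precedes p1 a b ∧ Precedes p2 a b ∧ subpath p1 a b ≠ subpath p2 a b

/-- The swap operation `φ_{a,b}(P1, P2)`. -/
def swap (p1 : List V) (x1 y1 : V) (p2 : List V) (x2 y2 : V) (a b : V) :
    List V × List V :=
  (pathConcat (pathConcat (subpath p1 x1 a) (subpath p2 a b)) (subpath p1 b y1),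
   pathConcat (pathConcat (subpath p2 x2 a) (subpath p1 a b)) (subpath p2 b y2))

/-- The graph with vertex `u` deleted. -/
def deleteVertex (E : V → V → Prop) (u : V) : V → V → Prop :=
  fun a b => E a b ∧ a ≠ u ∧ b ≠ u

/-- `u` is distance-critical for `(x, y)` : deleting `u` strictly increases
the distance from `x` to `y`. -/
def DistCritical (E : V → V → Prop) (ℓ : V → V → ℝ) (x y u : V) : Prop :=
  dist E ℓ x y < dist (deleteVertex E u) ℓ x y

/-- `Δ(x, y)` : the distance-critical vertices for `(x, y)` together with the
endpoints `x`, `y`. -/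
def Delta (E : V → V → Prop) (ℓ : V → V → ℝ) (x y : V) : Set V :=
  {u | DistCritical E ℓ x y u} ∪ {x, y}

/-- `δ(x, y) = |Δ(x, y)|`. -/
noncomputable def deltaCard (E : V → V → Prop) (ℓ : V → V → ℝ) (x y : V) : ℕ :=
  (Delta E ℓ x y).ncard

/-- `(a, b)` is a concordant pair for paths `p1` (from `x1` to `y1`) and
`p2` (from `x2` to `y2`). -/
def ConcordantPair (p1 : List V) (x1 y1 : V) (p2 : List V) (x2 y2 : V) (a b : V) : Prop :=
  a ∉ ({x1, y1} ∩ {x2, y2} : Set V) ∧ b ∉ ({x1, y1} ∩ {x2, y2} : Set V) ∧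
  Precedes p1 a b ∧ Precedes p2 a b ∧
  InternallyDisjoint (subpath p1 x1 a) x1 a (subpath p2 x2 a) x2 a ∧
  InternallyDisjoint (subpath p1 b y1) b y1 (subpath p2 b y2) b y2

/-- `𝒞(P1, P2)` : the set of concordant pairs for `(P1, P2)`. -/
def concordantSet (p1 : List V) (x1 y1 : V) (p2 : List V) (x2 y2 : V) : Set (V × V) :=
  {c | ConcordantPair p1 x1 y1 p2 x2 y2 c.1 c.2}

/-- The interaction complexity `γ(P1, P2) = Σ_{(v,w) ∈ 𝒞(P1,P2)} δ(v, w)`. -/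
noncomputable def gamma (E : V → V → Prop) (ℓ : V → V → ℝ)
    (p1 : List V) (x1 y1 : V) (p2 : List V) (x2 y2 : V) : ℕ :=
  ∑ᶠ c ∈ concordantSet p1 x1 y1 p2 x2 y2, deltaCard E ℓ c.1 c.2

/-- `E(x, y)` : the set of edges lying on at least one shortest path
from `x` to `y`. -/
def shortestEdges (E : V → V → Prop) (ℓ : V → V → ℝ) (x y : V) : Set (V × V) :=
  {e | ∃ p : List V, IsShortestPath E ℓ p x y ∧ e ∈ pathEdges p}

section Poly

variable (F : Type*) [Field F] [CharP F 2]

/-- The monomial `f(P) = ∏_{e ∈ E(P)} z_e` of a path. -/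
noncomputable def pathMon (p : List V) : MvPolynomial (V × V) F :=
  ((pathEdges p).map fun e => MvPolynomial.X e).prod

/-- The enumerating polynomial of a collection of paths. -/
noncomputable def enumPoly (S : Set (List V)) : MvPolynomial (V × V) F :=
  ∑ᶠ p ∈ S, pathMon F p

/-- The enumerating polynomial of a collection of pairs of paths. -/
noncomputable def enumPoly2 (S : Set (List V × List V)) : MvPolynomial (V × V) F :=
  ∑ᶠ q ∈ S, pathMon F q.1 * pathMon F q.2

variable (E : V → V → Prop) (ℓ : V → V → ℝ)

/-- `F(x, y)` : the enumerating polynomial of `Π(x, y)`. -/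
noncomputable def Fpoly (x y : V) : MvPolynomial (V × V) F :=
  enumPoly F {p : List V | IsShortestPath E ℓ p x y}

end Poly

variable (E : V → V → Prop) (ℓ : V → V → ℝ)

/-- The collection of internally vertex-disjoint pairs
`(P1, P2) ∈ Π(x1, y1) × Π(x2, y2)`. -/
def disjPairs (x1 y1 x2 y2 : V) : Set (List V × List V) :=
  {q | IsShortestPath E ℓ q.1 x1 y1 ∧ IsShortestPath E ℓ q.2 x2 y2 ∧
       InternallyDisjoint q.1 x1 y1 q.2 x2 y2}

/-- Pairs `(P1, P2) ∈ Π(x1, y1) × Π(x2, y2)` such that `v ∈ V(P1) ∩ V(P2)`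
and the prefix `P1[x1, v]` and the suffix `P2[v, y2]` are internally
vertex-disjoint (defining `H_v`). -/
def HvPairs (v x1 y1 x2 y2 : V) : Set (List V × List V) :=
  {q | IsShortestPath E ℓ q.1 x1 y1 ∧ IsShortestPath E ℓ q.2 x2 y2 ∧
       v ∈ q.1 ∧ v ∈ q.2 ∧
       InternallyDisjoint (subpath q.1 x1 v) x1 v (subpath q.2 v y2) v y2}

/-- Pairs `(P1, P2) ∈ Π(x1, y1) × Π(x2, y2)` such that
`(a, v) ∈ E(P1) ∩ E(P2)` and the prefix `P1[x1, a]` and the suffix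
`P2[v, y2]` are internally vertex-disjoint (defining `H_{av}`). -/
def HavPairs (a v x1 y1 x2 y2 : V) : Set (List V × List V) :=
  {q | IsShortestPath E ℓ q.1 x1 y1 ∧ IsShortestPath E ℓ q.2 x2 y2 ∧
       (a, v) ∈ pathEdges q.1 ∧ (a, v) ∈ pathEdges q.2 ∧
       InternallyDisjoint (subpath q.1 x1 a) x1 a (subpath q.2 v y2) v y2}

/-- Pairs `(P1, P2) ∈ Π(x1, y1) × Π(x2, y2)` such that `v ∈ V(P1) ∩ V(P2)`
and the prefix `P1[x1, v]` is internally vertex-disjoint from both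
`P2[x2, v]` and `P2[v, y2]` (defining `D_v`). -/
def DvPairs (v x1 y1 x2 y2 : V) : Set (List V × List V) :=
  {q | IsShortestPath E ℓ q.1 x1 y1 ∧ IsShortestPath E ℓ q.2 x2 y2 ∧
       v ∈ q.1 ∧ v ∈ q.2 ∧
       InternallyDisjoint (subpath q.1 x1 v) x1 v (subpath q.2 x2 v) x2 v ∧
       InternallyDisjoint (subpath q.1 x1 v) x1 v (subpath q.2 v y2) v y2}

/-- Pairs `(P1, P2) ∈ Π(x1, y1) × Π(x2, y2)` with interaction complexity
`γ(P1, P2) ≤ k` (defining `F_{disj,k}`). -/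
def disjkPairs (k : ℤ) (x1 y1 x2 y2 : V) : Set (List V × List V) :=
  {q | IsShortestPath E ℓ q.1 x1 y1 ∧ IsShortestPath E ℓ q.2 x2 y2 ∧
       (gamma E ℓ q.1 x1 y1 q.2 x2 y2 : ℤ) ≤ k}

/-- Pairs `(P1, P2) ∈ Π(x1, y1) × Π(x2, y2)` with `γ(P1, P2) ≤ k` such that
`(v, w) ∈ 𝒞(P1, P2)` and `(v, w)` is the concordant pair appearing first
along `P1` (defining `D_{v,w,k}`). -/
def DvwkPairs (k : ℤ) (v w x1 y1 x2 y2 : V) : Set (List V × List V) :=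
  {q | IsShortestPath E ℓ q.1 x1 y1 ∧ IsShortestPath E ℓ q.2 x2 y2 ∧
       (gamma E ℓ q.1 x1 y1 q.2 x2 y2 : ℤ) ≤ k ∧
       (v, w) ∈ concordantSet q.1 x1 y1 q.2 x2 y2 ∧
       ∀ c ∈ concordantSet q.1 x1 y1 q.2 x2 y2, q.1.idxOf v ≤ q.1.idxOf c.1}

/-- Pairs `(P1, P2) ∈ Π(x1, y1) × Π(x2, y2)` such that `v` and `w` lie on
both paths with `v` preceding `w` on both, the subpaths `P1[x1, v]` and
`P2[w, y2]` are internally vertex-disjoint, and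
`γ(P1[v, y1], P2[x2, w]) ≤ k` (defining `H_{v,w,k}`). -/
def HvwkPairs (k : ℤ) (v w x1 y1 x2 y2 : V) : Set (List V × List V) :=
  {q | IsShortestPath E ℓ q.1 x1 y1 ∧ IsShortestPath E ℓ q.2 x2 y2 ∧
       Precedes q.1 v w ∧ Precedes q.2 v w ∧
       InternallyDisjoint (subpath q.1 x1 v) x1 v (subpath q.2 w y2) w y2 ∧
       (gamma E ℓ (subpath q.1 v y1) v y1 (subpath q.2 x2 w) x2 w : ℤ) ≤ k}

/-- As `HvwkPairs`, additionally requiring the edge `(a, v)` on both paths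
(disjointness imposed on `P1[x1, a]` and `P2[w, y2]`), defining `H_{av,w,k}`. -/
def HavwkPairs (k : ℤ) (a v w x1 y1 x2 y2 : V) : Set (List V × List V) :=
  {q | IsShortestPath E ℓ q.1 x1 y1 ∧ IsShortestPath E ℓ q.2 x2 y2 ∧
       Precedes q.1 v w ∧ Precedes q.2 v w ∧
       (a, v) ∈ pathEdges q.1 ∧ (a, v) ∈ pathEdges q.2 ∧
       InternallyDisjoint (subpath q.1 x1 a) x1 a (subpath q.2 w y2) w y2 ∧
       (gamma E ℓ (subpath q.1 v y1) v y1 (subpath q.2 x2 w) x2 w : ℤ) ≤ k}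

/-- As `HvwkPairs`, additionally requiring the edge `(w, b)` on both paths
(disjointness imposed on `P1[x1, v]` and `P2[b, y2]`), defining `H_{v,wb,k}`. -/
def HvwbkPairs (k : ℤ) (v w b x1 y1 x2 y2 : V) : Set (List V × List V) :=
  {q | IsShortestPath E ℓ q.1 x1 y1 ∧ IsShortestPath E ℓ q.2 x2 y2 ∧
       Precedes q.1 v w ∧ Precedes q.2 v w ∧
       (w, b) ∈ pathEdges q.1 ∧ (w, b) ∈ pathEdges q.2 ∧
       InternallyDisjoint (subpath q.1 x1 v) x1 v (subpath q.2 b y2) b y2 ∧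
       (gamma E ℓ (subpath q.1 v y1) v y1 (subpath q.2 x2 w) x2 w : ℤ) ≤ k}

/-- As `HvwkPairs`, additionally requiring both edges `(a, v)` and `(w, b)`
on both paths (disjointness imposed on `P1[x1, a]` and `P2[b, y2]`),
defining `H_{av,wb,k}`. -/
def HavwbkPairs (k : ℤ) (a v w b x1 y1 x2 y2 : V) : Set (List V × List V) :=
  {q | IsShortestPath E ℓ q.1 x1 y1 ∧ IsShortestPath E ℓ q.2 x2 y2 ∧
       Precedes q.1 v w ∧ Precedes q.2 v w ∧
       (a, v) ∈ pathEdges q.1 ∧ (a, v) ∈ pathEdges q.2 ∧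
       (w, b) ∈ pathEdges q.1 ∧ (w, b) ∈ pathEdges q.2 ∧
       InternallyDisjoint (subpath q.1 x1 a) x1 a (subpath q.2 b y2) b y2 ∧
       (gamma E ℓ (subpath q.1 v y1) v y1 (subpath q.2 x2 w) x2 w : ℤ) ≤ k}


set_option maxHeartbeats 1000000
set_option linter.unusedSectionVars false

theorem pathWeight_nil (ℓ : V → V → ℝ) : pathWeight ℓ ([] : List V) = 0 := rfl
theorem pathWeight_single (ℓ : V → V → ℝ) (u : V) : pathWeight ℓ [u] = 0 := rfl
theorem pathWeight_cons_cons (ℓ : V → V → ℝ) (x y : V) (l : List V) :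
    pathWeight ℓ (x :: y :: l) = ℓ x y + pathWeight ℓ (y :: l) := by
  simp [pathWeight, pathEdges]
theorem pathWeight_split (ℓ : V → V → ℝ) (u : V) (l1 l2 : List V) :
    pathWeight ℓ (l1 ++ u :: l2) = pathWeight ℓ (l1 ++ [u]) + pathWeight ℓ (u :: l2) := by
  induction l1 with
  | nil => simp [pathWeight_single]
  | cons x t ih =>
    cases t with
    | nil => simp [pathWeight_cons_cons, pathWeight_single]
    | cons y t' =>
      simp only [List.cons_append, pathWeight_cons_cons]
      rw [← List.cons_append, ih]
      simp only [List.cons_append]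
      ring

theorem pathConcat_eq (q r : List V) (u : V) (hq : q.getLast? = some u)
    (hr : r.head? = some u) : pathConcat q r = q.dropLast ++ u :: r.tail := by
  have h1 : q.dropLast ++ [u] = q := by
    have hne : q ≠ [] := by rintro rfl; simp at hq
    have := List.dropLast_append_getLast hne
    rwa [show q.getLast hne = u by
      have := List.getLast?_eq_getLast hne; rw [hq] at this; exact (Option.some_injective _ this.symm)] at this
  calc pathConcat q r = (q.dropLast ++ [u]) ++ r.tail := by rw [h1]; rfl
    _ = q.dropLast ++ u :: r.tail := by simp

theorem pathWeight_pathConcat (ℓ : V → V → ℝ) (q r : List V) (u : V)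
    (hq : q.getLast? = some u) (hr : r.head? = some u) :
    pathWeight ℓ (pathConcat q r) = pathWeight ℓ q + pathWeight ℓ r := by
  rw [pathConcat_eq q r u hq hr, pathWeight_split]
  have h1 : q.dropLast ++ [u] = q := by
    have : pathConcat q r = q.dropLast ++ u :: r.tail := pathConcat_eq q r u hq hr
    have hne : q ≠ [] := by rintro rfl; simp at hq
    have h2 := List.dropLast_append_getLast hne
    rwa [show q.getLast hne = u by
      have := List.getLast?_eq_getLast hne; rw [hq] at this; exact (Option.some_injective _ this.symm)] at h2
  have h2 : r = u :: r.tail := by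
    cases r with
    | nil => simp at hr
    | cons a t => simp at hr; subst hr; rfl
  rw [h1, ← h2]

theorem chain'_pathConcat {E : V → V → Prop} (q r : List V) (u : V)
    (hcq : q.Chain' E) (hcr : r.Chain' E)
    (hq : q.getLast? = some u) (hr : r.head? = some u) :
    (pathConcat q r).Chain' E := by
  rw [pathConcat]
  unfold List.Chain'
  rw [List.isChain_append]
  refine ⟨hcq, hcr.tail, ?_⟩
  intro x hx y hy
  rw [hq] at hx; simp at hx; subst hx
  cases r with
  | nil => simp at hr
  | cons a t =>
    simp at hr; subst hr
    cases t with
    | nil => simp at hy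
    | cons b t' =>
      simp at hy; subst hy
      exact (List.isChain_cons_cons.mp hcr).1

theorem head?_pathConcat (q r : List V) (hne : q ≠ []) :
    (pathConcat q r).head? = q.head? := by
  cases q with
  | nil => exact absurd rfl hne
  | cons a t => rfl

theorem getLast?_pathConcat (q r : List V) (u : V)
    (hq : q.getLast? = some u) (hr : r.head? = some u) :
    (pathConcat q r).getLast? = r.getLast? := by
  rw [pathConcat_eq q r u hq hr]
  rw [List.getLast?_append]
  cases r with
  | nil => simp at hr
  | cons a t =>
    simp at hr; subst hr
    cases t with
    | nil => simp [hq]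
    | cons b t' =>
      have h3 : (a :: b :: t').getLast? = some ((a :: b :: t').getLast (by simp)) :=
        List.getLast?_eq_getLast (by simp)
      simp only [List.tail_cons]
      rw [h3]; rfl

theorem getLast?_append_cons (l : List V) (x : V) (m : List V) :
    (l ++ x :: m).getLast? = (x :: m).getLast? := by
  rw [List.getLast?_append]
  rw [List.getLast?_eq_getLast (l := x :: m) (by simp)]
  rfl

theorem head?_append_cons (l : List V) (x : V) (m m' : List V) :
    (l ++ x :: m).head? = (l ++ x :: m').head? := by
  cases l with
  | nil => rfl
  | cons a t => rfl

theorem not_nodup_decomp {t : List V} (h : ¬ t.Nodup) :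
    ∃ (x : V) (t1 t2 t3 : List V), t = t1 ++ x :: t2 ++ x :: t3 := by
  obtain ⟨x, hdup⟩ := List.exists_duplicate_iff_not_nodup.mpr h
  rw [List.duplicate_iff_sublist] at hdup
  rw [List.cons_sublist_iff] at hdup
  obtain ⟨r1, r2, rfl, hx1, hx2⟩ := hdup
  have hx2' : x ∈ r2 := by
    rw [List.cons_sublist_iff] at hx2
    obtain ⟨s1, s2, rfl, hm, -⟩ := hx2
    exact List.mem_append_left _ hm
  obtain ⟨a1, b1, rfl⟩ := List.append_of_mem hx1
  obtain ⟨a2, b2, rfl⟩ := List.append_of_mem hx2'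
  exact ⟨x, a1, b1 ++ a2, b2, by simp⟩

theorem closedWalk_pos {E : V → V → Prop} {ℓ : V → V → ℝ} (hG : NoNonposCycle E ℓ)
    (p : List V) (hlen : 2 ≤ p.length) (hch : p.Chain' E) (hcl : p.head? = p.getLast?) :
    0 < pathWeight ℓ p := by
  generalize hn : p.length = n
  induction n using Nat.strong_induction_on generalizing p with
  | _ n ih =>
  subst hn
  by_cases hnd : p.tail.Nodup
  · exact hG p ⟨hlen, hch, hcl, hnd⟩
  · obtain ⟨a, t, rfl⟩ : ∃ a t, p = a :: t := by
      cases p with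
      | nil => simp at hlen
      | cons a t => exact ⟨a, t, rfl⟩
    simp only [List.tail_cons] at hnd
    obtain ⟨x, t1, t2, t3, rfl⟩ := not_nodup_decomp hnd
    -- p = a :: t1 ++ x :: t2 ++ x :: t3
    have hps : a :: (t1 ++ x :: t2 ++ x :: t3) =
        (a :: t1) ++ (x :: t2 ++ [x]) ++ t3 := by simp
    have hlast1 : (a :: t1 ++ [x]).getLast? = some x := by
      rw [getLast?_append_cons]; rfl
    have hlastC1 : (x :: t2 ++ [x]).getLast? = some x := by
      rw [getLast?_append_cons]; rfl
    -- Chain' facts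
    have hch1 : (a :: t1 ++ [x]).Chain' E := by
      refine hch.prefix ⟨t2 ++ x :: t3, ?_⟩; simp
    have hchC1 : (x :: t2 ++ [x]).Chain' E := by
      refine hch.infix ⟨a :: t1, t3, ?_⟩; simp
    have hch3 : (x :: t3).Chain' E := by
      refine hch.suffix ⟨a :: t1 ++ x :: t2, ?_⟩; simp
    -- C2 as pathConcat
    set C2 := pathConcat (a :: t1 ++ [x]) (x :: t3) with hC2
    have hC2eq : C2 = a :: t1 ++ x :: t3 := by simp [hC2, pathConcat]
    have hchC2 : C2.Chain' E := chain'_pathConcat _ _ x hch1 hch3 hlast1 rfl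
    -- closure of C1
    have hclC1 : (x :: t2 ++ [x]).head? = (x :: t2 ++ [x]).getLast? := by
      rw [hlastC1]; rfl
    -- closure of C2
    have hplast : (a :: (t1 ++ x :: t2 ++ x :: t3)).getLast? = (x :: t3).getLast? := by
      rw [show a :: (t1 ++ x :: t2 ++ x :: t3) = (a :: t1 ++ x :: t2) ++ x :: t3 by simp]
      exact getLast?_append_cons _ _ _
    have hclC2 : C2.head? = C2.getLast? := by
      rw [hC2eq]
      rw [show a :: t1 ++ x :: t3 = (a :: t1) ++ x :: t3 by simp] at *
      rw [getLast?_append_cons]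
      have : (a :: t1 ++ x :: t3).head? = some a := by cases t1 <;> rfl
      rw [this]
      rw [← hplast, ← hcl]
      rfl
    -- lengths
    have hlenC1 : 2 ≤ (x :: t2 ++ [x]).length := by simp
    have hlenC2 : 2 ≤ C2.length := by simp [hC2eq]; omega
    have hltC1 : (x :: t2 ++ [x]).length < (a :: (t1 ++ x :: t2 ++ x :: t3)).length := by
      simp; omega
    have hltC2 : C2.length < (a :: (t1 ++ x :: t2 ++ x :: t3)).length := by
      simp [hC2eq]
    have h1 := ih _ hltC1 _ hlenC1 hchC1 hclC1 rfl
    have h2 := ih _ hltC2 _ hlenC2 hchC2 hclC2 rfl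
    -- weight decomposition
    have hw : pathWeight ℓ (a :: (t1 ++ x :: t2 ++ x :: t3)) =
        pathWeight ℓ (x :: t2 ++ [x]) + pathWeight ℓ C2 := by
      have e1 : pathWeight ℓ ((a :: t1) ++ x :: (t2 ++ x :: t3)) =
          pathWeight ℓ (a :: t1 ++ [x]) + pathWeight ℓ (x :: (t2 ++ x :: t3)) :=
        pathWeight_split ℓ x (a :: t1) (t2 ++ x :: t3)
      have e2 : pathWeight ℓ ((x :: t2) ++ x :: t3) =
          pathWeight ℓ (x :: t2 ++ [x]) + pathWeight ℓ (x :: t3) :=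
        pathWeight_split ℓ x (x :: t2) t3
      have e3 : pathWeight ℓ C2 =
          pathWeight ℓ (a :: t1 ++ [x]) + pathWeight ℓ (x :: t3) :=
        pathWeight_pathConcat ℓ _ _ x hlast1 rfl
      have e0 : a :: (t1 ++ x :: t2 ++ x :: t3) = (a :: t1) ++ x :: (t2 ++ x :: t3) := by simp
      have e0' : x :: (t2 ++ x :: t3) = (x :: t2) ++ x :: t3 := by simp
      rw [e0, e1, e0', e2, e3]; ring
    rw [hw]; linarith

theorem walk_shortcut {E : V → V → Prop} {ℓ : V → V → ℝ} (hG : NoNonposCycle E ℓ)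
    (p : List V) (x y : V) (hch : p.Chain' E) (hh : p.head? = some x)
    (hl : p.getLast? = some y) :
    ∃ q : List V, IsPathFrom E q x y ∧ pathWeight ℓ q ≤ pathWeight ℓ p := by
  generalize hn : p.length = n
  induction n using Nat.strong_induction_on generalizing p with
  | _ n ih =>
  subst hn
  by_cases hnd : p.Nodup
  · exact ⟨p, ⟨⟨by rintro rfl; simp at hh, hnd, hch⟩, hh, hl⟩, le_refl _⟩
  · obtain ⟨u, l1, l2, l3, rfl⟩ := not_nodup_decomp hnd
    set q0 := l1 ++ u :: l3 with hq0
    have hh0 : q0.head? = some x := by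
      rw [hq0, head?_append_cons l1 u l3 (l2 ++ u :: l3)]
      rw [show l1 ++ u :: (l2 ++ u :: l3) = l1 ++ u :: l2 ++ u :: l3 by simp]
      exact hh
    have hl0 : q0.getLast? = some y := by
      rw [hq0, getLast?_append_cons]
      rw [show l1 ++ u :: l2 ++ u :: l3 = (l1 ++ u :: l2) ++ u :: l3 by simp] at hl
      rw [getLast?_append_cons] at hl
      exact hl
    have hch1 : (l1 ++ [u]).Chain' E := by
      refine hch.prefix ⟨l2 ++ u :: l3, ?_⟩; simp
    have hch3 : (u :: l3).Chain' E := by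
      refine hch.suffix ⟨l1 ++ u :: l2, ?_⟩; simp
    have hlast1 : (l1 ++ [u]).getLast? = some u := by
      rw [getLast?_append_cons]; rfl
    have hch0 : q0.Chain' E := by
      have := chain'_pathConcat _ _ u hch1 hch3 hlast1 rfl
      rwa [show pathConcat (l1 ++ [u]) (u :: l3) = q0 by simp [pathConcat, hq0]] at this
    have hchC : (u :: l2 ++ [u]).Chain' E := by
      refine hch.infix ⟨l1, l3, ?_⟩; simp
    have hposC : 0 < pathWeight ℓ (u :: l2 ++ [u]) := by
      refine closedWalk_pos hG _ (by simp) hchC ?_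
      rw [getLast?_append_cons]; rfl
    have hw : pathWeight ℓ (l1 ++ u :: l2 ++ u :: l3) =
        pathWeight ℓ q0 + pathWeight ℓ (u :: l2 ++ [u]) := by
      have e1 : pathWeight ℓ (l1 ++ u :: (l2 ++ u :: l3)) =
          pathWeight ℓ (l1 ++ [u]) + pathWeight ℓ (u :: (l2 ++ u :: l3)) :=
        pathWeight_split ℓ u l1 (l2 ++ u :: l3)
      have e2 : pathWeight ℓ ((u :: l2) ++ u :: l3) =
          pathWeight ℓ (u :: l2 ++ [u]) + pathWeight ℓ (u :: l3) :=
        pathWeight_split ℓ u (u :: l2) l3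
      have e3 : pathWeight ℓ q0 =
          pathWeight ℓ (l1 ++ [u]) + pathWeight ℓ (u :: l3) :=
        pathWeight_split ℓ u l1 l3
      rw [show l1 ++ u :: l2 ++ u :: l3 = l1 ++ u :: (l2 ++ u :: l3) by simp, e1,
        show u :: (l2 ++ u :: l3) = (u :: l2) ++ u :: l3 by simp, e2, e3]
      ring
    have hlt : q0.length < (l1 ++ u :: l2 ++ u :: l3).length := by simp [hq0]
    obtain ⟨q, hq, hle⟩ := ih _ hlt q0 hch0 hh0 hl0 rfl
    exact ⟨q, hq, by rw [hw]; linarith⟩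

theorem idxOf_head {p : List V} {x : V} (hh : p.head? = some x) : p.idxOf x = 0 := by
  cases p with
  | nil => simp at hh
  | cons a t => simp at hh; subst hh; simp

theorem idxOf_lt {p : List V} {u : V} (hu : u ∈ p) : p.idxOf u < p.length :=
  List.idxOf_lt_length_iff.mpr hu

theorem idxOf_last {p : List V} (hnd : p.Nodup) {y : V} (hl : p.getLast? = some y) :
    p.idxOf y = p.length - 1 := by
  have hne : p ≠ [] := by rintro rfl; simp at hl
  have hlen : 0 < p.length := List.length_pos_iff.mpr hne
  have h1 : p[p.length - 1]? = some y := by rw [← List.getLast?_eq_getElem?]; exact hl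
  obtain ⟨hlt', h2⟩ := List.getElem?_eq_some_iff.mp h1
  rw [← h2]; exact List.Nodup.idxOf_getElem hnd _ hlt'

theorem mem_take_iff {p : List V} (hnd : p.Nodup) {u : V} {k : ℕ} :
    u ∈ p.take k ↔ u ∈ p ∧ p.idxOf u < k := by
  rw [List.mem_take_iff_getElem]
  constructor
  · rintro ⟨i, hm, rfl⟩
    have hi : i < p.length := lt_of_lt_of_le hm inf_le_right
    exact ⟨List.getElem_mem _, by rw [List.Nodup.idxOf_getElem hnd _ hi]; exact lt_of_lt_of_le hm inf_le_left⟩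
  · rintro ⟨hu, hk⟩
    exact ⟨p.idxOf u, lt_inf_iff.mpr ⟨hk, idxOf_lt hu⟩, List.getElem_idxOf (idxOf_lt hu)⟩

theorem mem_drop_iff {p : List V} (hnd : p.Nodup) {u : V} {k : ℕ} :
    u ∈ p.drop k ↔ u ∈ p ∧ k ≤ p.idxOf u := by
  constructor
  · intro h
    obtain ⟨j, hj, hju⟩ := List.mem_iff_getElem.mp h
    rw [List.getElem_drop] at hju
    have hkj : k + j < p.length := by rw [List.length_drop] at hj; omega
    refine ⟨hju ▸ List.getElem_mem _, ?_⟩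
    rw [← hju, List.Nodup.idxOf_getElem hnd _ hkj]; omega
  · rintro ⟨hu, hk⟩
    have hiu := idxOf_lt hu
    rw [List.mem_iff_getElem?]
    refine ⟨p.idxOf u - k, ?_⟩
    rw [List.getElem?_drop, show k + (p.idxOf u - k) = p.idxOf u by omega]
    exact List.getElem?_idxOf hu

theorem idxOf_take {p : List V} {k : ℕ} {u : V} (hu : u ∈ p.take k) :
    (p.take k).idxOf u = p.idxOf u := by
  conv_rhs => rw [← List.take_append_drop k p]
  rw [List.idxOf_append_of_mem hu]

theorem mem_subpath_iff {p : List V} (hnd : p.Nodup) {a b u : V} :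
    u ∈ subpath p a b ↔ u ∈ p ∧ p.idxOf a ≤ p.idxOf u ∧ p.idxOf u ≤ p.idxOf b := by
  rw [subpath]
  have hndt : (p.take (p.idxOf b + 1)).Nodup := List.Nodup.sublist (List.take_sublist _ _) hnd
  rw [mem_drop_iff hndt]
  constructor
  · rintro ⟨ht, hk⟩
    rw [idxOf_take ht] at hk
    obtain ⟨hu, hlt⟩ := (mem_take_iff hnd).mp ht
    exact ⟨hu, hk, by omega⟩
  · rintro ⟨hu, h1, h2⟩
    have ht : u ∈ p.take (p.idxOf b + 1) := (mem_take_iff hnd).mpr ⟨hu, by omega⟩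
    exact ⟨ht, by rw [idxOf_take ht]; exact h1⟩

theorem subpath_head? {p : List V} (hnd : p.Nodup) {a b : V} (ha : a ∈ p)
    (hab : p.idxOf a ≤ p.idxOf b) :
    (subpath p a b).head? = some a := by
  rw [subpath, List.head?_drop, List.getElem?_take, if_pos (by omega)]
  exact List.getElem?_idxOf ha

theorem subpath_getLast? {p : List V} (hnd : p.Nodup) {a b : V} (hb : b ∈ p)
    (hab : p.idxOf a ≤ p.idxOf b) :
    (subpath p a b).getLast? = some b := by
  have hib := idxOf_lt hb
  rw [subpath, List.getLast?_eq_getElem?]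
  have hlen : ((p.take (p.idxOf b + 1)).drop (p.idxOf a)).length
      = p.idxOf b + 1 - p.idxOf a := by
    rw [List.length_drop, List.length_take]; omega
  rw [hlen, List.getElem?_drop, List.getElem?_take,
    if_pos (by omega), show p.idxOf a + (p.idxOf b + 1 - p.idxOf a - 1) = p.idxOf b by omega]
  exact List.getElem?_idxOf hb

theorem subpath_ne_nil {p : List V} {a b : V} (hb : b ∈ p)
    (hab : p.idxOf a ≤ p.idxOf b) : subpath p a b ≠ [] := by
  have hib := idxOf_lt hb
  have : (subpath p a b).length = p.idxOf b + 1 - p.idxOf a := by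
    rw [subpath, List.length_drop, List.length_take]; omega
  intro h; rw [h] at this; simp at this; omega

theorem subpath_chain' {E : V → V → Prop} {p : List V} (hch : p.Chain' E) (a b : V) :
    (subpath p a b).Chain' E :=
  (hch.take _).drop _

theorem subpath_nodup {p : List V} (hnd : p.Nodup) (a b : V) :
    (subpath p a b).Nodup :=
  List.Nodup.sublist ((List.drop_sublist _ _).trans (List.take_sublist _ _)) hnd

theorem subpath_sublist (p : List V) (a b : V) : (subpath p a b).Sublist p :=
  (List.drop_sublist _ _).trans (List.take_sublist _ _)

theorem subpath_whole {p : List V} (hnd : p.Nodup) {x y : V}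
    (hh : p.head? = some x) (hl : p.getLast? = some y) : subpath p x y = p := by
  have hne : p ≠ [] := by rintro rfl; simp at hh
  have hlen : 0 < p.length := List.length_pos_iff.mpr hne
  rw [subpath, idxOf_head hh, idxOf_last hnd hl, List.drop_zero,
    show p.length - 1 + 1 = p.length by omega, List.take_length]

theorem subpath_concat {p : List V} {a b c : V} (hc : c ∈ p)
    (hab : p.idxOf a ≤ p.idxOf b) (hbc : p.idxOf b ≤ p.idxOf c) :
    subpath p a c = pathConcat (subpath p a b) (subpath p b c) := by
  have hic := idxOf_lt hc
  set ia := p.idxOf a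
  set ib := p.idxOf b
  set ic := p.idxOf c
  rw [pathConcat, subpath, subpath, subpath, List.tail_drop]
  set A := p.take (ic + 1) with hA
  have h1 : p.take (ib + 1) = A.take (ib + 1) := by
    rw [hA, List.take_take, min_eq_left (by omega)]
  rw [h1]
  have h2 : A = A.take (ib + 1) ++ A.drop (ib + 1) := (List.take_append_drop _ _).symm
  conv_lhs => rw [h2]
  rw [List.drop_append_of_le_length]
  rw [List.length_take, hA, List.length_take]; omega

theorem subpath_weight_add (ℓ : V → V → ℝ) {p : List V} (hnd : p.Nodup)
    {a b c : V} (ha : a ∈ p) (hb : b ∈ p) (hc : c ∈ p)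
    (hab : p.idxOf a ≤ p.idxOf b) (hbc : p.idxOf b ≤ p.idxOf c) :
    pathWeight ℓ (subpath p a c) =
      pathWeight ℓ (subpath p a b) + pathWeight ℓ (subpath p b c) := by
  rw [subpath_concat hc hab hbc]
  exact pathWeight_pathConcat ℓ _ _ b (subpath_getLast? hnd hb hab) (subpath_head? hnd hb hbc)

theorem mem_of_head? {p : List V} {x : V} (hh : p.head? = some x) : x ∈ p := by
  cases p with
  | nil => simp at hh
  | cons a t => simp at hh; subst hh; simp

theorem mem_of_getLast? {p : List V} {y : V} (hl : p.getLast? = some y) : y ∈ p := by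
  have hne : p ≠ [] := by rintro rfl; simp at hl
  rw [List.getLast?_eq_getLast hne] at hl
  have := List.getLast_mem hne
  rwa [Option.some_injective _ hl] at this

theorem subpath_isPathFrom {E : V → V → Prop} {p : List V} (hnd : p.Nodup)
    (hch : p.Chain' E) {a b : V} (ha : a ∈ p) (hb : b ∈ p)
    (hab : p.idxOf a ≤ p.idxOf b) : IsPathFrom E (subpath p a b) a b :=
  ⟨⟨subpath_ne_nil hb hab, subpath_nodup hnd _ _, subpath_chain' hch _ _⟩,
    subpath_head? hnd ha hab, subpath_getLast? hnd hb hab⟩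

theorem subpath_shortest_le {E : V → V → Prop} {ℓ : V → V → ℝ}
    (hG : NoNonposCycle E ℓ) {P : List V} {x y : V}
    (hP : IsShortestPath E ℓ P x y) {a b : V} (ha : a ∈ P) (hb : b ∈ P)
    (hab : P.idxOf a ≤ P.idxOf b) {Q : List V} (hQ : IsPathFrom E Q a b) :
    pathWeight ℓ (subpath P a b) ≤ pathWeight ℓ Q := by
  obtain ⟨⟨⟨hPne, hPnd, hPch⟩, hPh, hPl⟩, hPd⟩ := hP
  by_contra hcon
  push_neg at hcon
  have hx : x ∈ P := mem_of_head? hPh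
  have hy : y ∈ P := mem_of_getLast? hPl
  have hix : P.idxOf x = 0 := idxOf_head hPh
  have hiy : P.idxOf y = P.length - 1 := idxOf_last hPnd hPl
  have hxa : P.idxOf x ≤ P.idxOf a := by omega
  have hby : P.idxOf b ≤ P.idxOf y := by have := idxOf_lt hb; omega
  obtain ⟨⟨hQne, hQnd, hQch⟩, hQh, hQl⟩ := hQ
  set S1 := subpath P x a with hS1
  set S3 := subpath P b y with hS3
  have hS1l : S1.getLast? = some a := subpath_getLast? hPnd ha hxa
  have hS1h : S1.head? = some x := subpath_head? hPnd hx hxa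
  have hS3h : S3.head? = some b := subpath_head? hPnd hb hby
  have hS3l : S3.getLast? = some y := subpath_getLast? hPnd hy hby
  set C1 := pathConcat S1 Q with hC1
  have hC1ch : C1.Chain' E := chain'_pathConcat _ _ a (subpath_chain' hPch _ _) hQch hS1l hQh
  have hS1ne : S1 ≠ [] := subpath_ne_nil ha hxa
  have hC1h : C1.head? = some x := by rw [hC1, head?_pathConcat _ _ hS1ne, hS1h]
  have hC1l : C1.getLast? = some b := by rw [hC1, getLast?_pathConcat _ _ a hS1l hQh, hQl]
  have hC1ne : C1 ≠ [] := by
    rw [hC1, pathConcat]; intro h; exact hS1ne (List.append_eq_nil_iff.mp h).1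
  set R := pathConcat C1 S3 with hR
  have hRch : R.Chain' E := chain'_pathConcat _ _ b hC1ch (subpath_chain' hPch _ _) hC1l hS3h
  have hRh : R.head? = some x := by rw [hR, head?_pathConcat _ _ hC1ne, hC1h]
  have hRl : R.getLast? = some y := by rw [hR, getLast?_pathConcat _ _ b hC1l hS3h, hS3l]
  have hRw : pathWeight ℓ R = pathWeight ℓ S1 + pathWeight ℓ Q + pathWeight ℓ S3 := by
    rw [hR, pathWeight_pathConcat ℓ _ _ b hC1l hS3h,
      hC1, pathWeight_pathConcat ℓ _ _ a hS1l hQh]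
  have hPw : pathWeight ℓ P = pathWeight ℓ S1 + pathWeight ℓ (subpath P a b)
      + pathWeight ℓ S3 := by
    have e1 : pathWeight ℓ (subpath P x y) =
        pathWeight ℓ (subpath P x a) + pathWeight ℓ (subpath P a y) :=
      subpath_weight_add ℓ hPnd hx ha hy hxa (by omega)
    have e2 : pathWeight ℓ (subpath P a y) =
        pathWeight ℓ (subpath P a b) + pathWeight ℓ (subpath P b y) :=
      subpath_weight_add ℓ hPnd ha hb hy hab hby
    have e0 : pathWeight ℓ P = pathWeight ℓ (subpath P x y) := by
      rw [subpath_whole hPnd hPh hPl]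
    rw [e0, e1, e2]; ring
  obtain ⟨q', hq', hle⟩ := walk_shortcut hG R x y hRch hRh hRl
  have hdle : dist E ℓ x y ≤ (pathWeight ℓ q' : EReal) :=
    sInf_le ⟨q', hq', rfl⟩
  rw [← hPd] at hdle
  have : pathWeight ℓ P ≤ pathWeight ℓ q' := EReal.coe_le_coe_iff.mp hdle
  rw [hRw] at hle
  linarith

theorem cross_core {E : V → V → Prop} {ℓ : V → V → ℝ} (hG : NoNonposCycle E ℓ)
    {P1 P2 : List V} (hnd1 : P1.Nodup) (hch1 : P1.Chain' E)
    (hnd2 : P2.Nodup) (hch2 : P2.Chain' E) {a b : V}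
    (ha1 : a ∈ P1) (hb1 : b ∈ P1) (ha2 : a ∈ P2) (hb2 : b ∈ P2)
    (hab1 : P1.idxOf a ≤ P1.idxOf b) (hba2 : P2.idxOf b ≤ P2.idxOf a)
    (hne : a ≠ b)
    (hw : pathWeight ℓ (subpath P1 a b) + pathWeight ℓ (subpath P2 b a) ≤ 0) :
    False := by
  have hlt1 : P1.idxOf a < P1.idxOf b := by
    rcases lt_or_eq_of_le hab1 with h | h
    · exact h
    · exact absurd ((List.idxOf_inj ha1 (y := b)).mp h) hne
  set C := pathConcat (subpath P1 a b) (subpath P2 b a) with hC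
  have h1l : (subpath P1 a b).getLast? = some b := subpath_getLast? hnd1 hb1 hab1
  have h2h : (subpath P2 b a).head? = some b := subpath_head? hnd2 hb2 hba2
  have hCch : C.Chain' E :=
    chain'_pathConcat _ _ b (subpath_chain' hch1 _ _) (subpath_chain' hch2 _ _) h1l h2h
  have h1ne : subpath P1 a b ≠ [] := subpath_ne_nil hb1 hab1
  have hCh : C.head? = some a := by
    rw [hC, head?_pathConcat _ _ h1ne, subpath_head? hnd1 ha1 hab1]
  have hCl : C.getLast? = some a := by
    rw [hC, getLast?_pathConcat _ _ b h1l h2h, subpath_getLast? hnd2 ha2 hba2]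
  have hClen : 2 ≤ C.length := by
    have hlb := idxOf_lt hb1
    have h1len : (subpath P1 a b).length = P1.idxOf b + 1 - P1.idxOf a := by
      rw [subpath, List.length_drop, List.length_take]; omega
    have : 2 ≤ (subpath P1 a b).length := by omega
    rw [hC, pathConcat, List.length_append]; omega
  have hpos := closedWalk_pos hG C hClen hCch (by rw [hCh, hCl])
  have hCw : pathWeight ℓ C =
      pathWeight ℓ (subpath P1 a b) + pathWeight ℓ (subpath P2 b a) :=
    pathWeight_pathConcat ℓ _ _ b h1l h2h
  rw [hCw] at hpos; linarith

/-- Crossing with a common later vertex is impossible. -/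
theorem cross_later {E : V → V → Prop} {ℓ : V → V → ℝ} (hG : NoNonposCycle E ℓ)
    {P1 P2 : List V} {x1 y1 x2 y2 : V}
    (h1 : IsShortestPath E ℓ P1 x1 y1) (h2 : IsShortestPath E ℓ P2 x2 y2)
    {a b c : V}
    (ha1 : a ∈ P1) (hb1 : b ∈ P1) (hc1 : c ∈ P1)
    (ha2 : a ∈ P2) (hb2 : b ∈ P2) (hc2 : c ∈ P2)
    (hab1 : P1.idxOf a ≤ P1.idxOf b) (hba2 : P2.idxOf b ≤ P2.idxOf a)
    (hbc1 : P1.idxOf b ≤ P1.idxOf c) (hac2 : P2.idxOf a ≤ P2.idxOf c)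
    (hne : a ≠ b) : False := by
  obtain ⟨⟨⟨-, hnd1, hch1⟩, -, -⟩, -⟩ := id h1
  obtain ⟨⟨⟨-, hnd2, hch2⟩, -, -⟩, -⟩ := id h2
  have i1 : pathWeight ℓ (subpath P1 a c) ≤ pathWeight ℓ (subpath P2 a c) :=
    subpath_shortest_le hG h1 ha1 hc1 (le_trans hab1 hbc1)
      (subpath_isPathFrom hnd2 hch2 ha2 hc2 hac2)
  have i2 : pathWeight ℓ (subpath P2 b c) ≤ pathWeight ℓ (subpath P1 b c) :=
    subpath_shortest_le hG h2 hb2 hc2 (le_trans hba2 hac2)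
      (subpath_isPathFrom hnd1 hch1 hb1 hc1 hbc1)
  have e1 : pathWeight ℓ (subpath P1 a c) =
      pathWeight ℓ (subpath P1 a b) + pathWeight ℓ (subpath P1 b c) :=
    subpath_weight_add ℓ hnd1 ha1 hb1 hc1 hab1 hbc1
  have e2 : pathWeight ℓ (subpath P2 b c) =
      pathWeight ℓ (subpath P2 b a) + pathWeight ℓ (subpath P2 a c) :=
    subpath_weight_add ℓ hnd2 hb2 ha2 hc2 hba2 hac2
  exact cross_core hG hnd1 hch1 hnd2 hch2 ha1 hb1 ha2 hb2 hab1 hba2 hne (by linarith)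

/-- Crossing with a common earlier vertex is impossible. -/
theorem cross_earlier {E : V → V → Prop} {ℓ : V → V → ℝ} (hG : NoNonposCycle E ℓ)
    {P1 P2 : List V} {x1 y1 x2 y2 : V}
    (h1 : IsShortestPath E ℓ P1 x1 y1) (h2 : IsShortestPath E ℓ P2 x2 y2)
    {a b d : V}
    (ha1 : a ∈ P1) (hb1 : b ∈ P1) (hd1 : d ∈ P1)
    (ha2 : a ∈ P2) (hb2 : b ∈ P2) (hd2 : d ∈ P2)
    (hab1 : P1.idxOf a ≤ P1.idxOf b) (hba2 : P2.idxOf b ≤ P2.idxOf a)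
    (hda1 : P1.idxOf d ≤ P1.idxOf a) (hdb2 : P2.idxOf d ≤ P2.idxOf b)
    (hne : a ≠ b) : False := by
  obtain ⟨⟨⟨-, hnd1, hch1⟩, -, -⟩, -⟩ := id h1
  obtain ⟨⟨⟨-, hnd2, hch2⟩, -, -⟩, -⟩ := id h2
  have i1 : pathWeight ℓ (subpath P1 d b) ≤ pathWeight ℓ (subpath P2 d b) :=
    subpath_shortest_le hG h1 hd1 hb1 (le_trans hda1 hab1)
      (subpath_isPathFrom hnd2 hch2 hd2 hb2 hdb2)
  have i2 : pathWeight ℓ (subpath P2 d a) ≤ pathWeight ℓ (subpath P1 d a) :=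
    subpath_shortest_le hG h2 hd2 ha2 (le_trans hdb2 hba2)
      (subpath_isPathFrom hnd1 hch1 hd1 ha1 hda1)
  have e1 : pathWeight ℓ (subpath P1 d b) =
      pathWeight ℓ (subpath P1 d a) + pathWeight ℓ (subpath P1 a b) :=
    subpath_weight_add ℓ hnd1 hd1 ha1 hb1 hda1 hab1
  have e2 : pathWeight ℓ (subpath P2 d a) =
      pathWeight ℓ (subpath P2 d b) + pathWeight ℓ (subpath P2 b a) :=
    subpath_weight_add ℓ hnd2 hd2 hb2 ha2 hdb2 hba2
  exact cross_core hG hnd1 hch1 hnd2 hch2 ha1 hb1 ha2 hb2 hab1 hba2 hne (by linarith)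

theorem pre_lemma {P1 P2 : List V} {s1 t1 s2 t2 a b u : V}
    (hnd1 : P1.Nodup) (hnd2 : P2.Nodup)
    (hh1 : P1.head? = some s1) (hh2 : P2.head? = some s2)
    (hc : ConcordantPair P1 s1 t1 P2 s2 t2 a b)
    (huB : u ∉ ({s1, t1} ∩ {s2, t2} : Set V))
    (hu1 : u ∈ P1) (hu2 : u ∈ P2)
    (h1 : P1.idxOf u ≤ P1.idxOf a) (h2 : P2.idxOf u ≤ P2.idxOf a) : u = a := by
  obtain ⟨-, -, -, -, hpre, -⟩ := hc
  have hm1 : u ∈ subpath P1 s1 a :=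
    (mem_subpath_iff hnd1).mpr ⟨hu1, by rw [idxOf_head hh1]; omega, h1⟩
  have hm2 : u ∈ subpath P2 s2 a :=
    (mem_subpath_iff hnd2).mpr ⟨hu2, by rw [idxOf_head hh2]; omega, h2⟩
  have := hpre u hm1 hm2
  obtain ⟨hl, hr⟩ := this
  simp only [Set.mem_insert_iff, Set.mem_singleton_iff] at hl hr
  rcases hl with rfl | rfl
  · rcases hr with rfl | rfl
    · exact absurd ⟨by simp, by simp⟩ huB
    · rfl
  · rfl

theorem suf_lemma {P1 P2 : List V} {s1 t1 s2 t2 a b u : V}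
    (hnd1 : P1.Nodup) (hnd2 : P2.Nodup)
    (hl1 : P1.getLast? = some t1) (hl2 : P2.getLast? = some t2)
    (hc : ConcordantPair P1 s1 t1 P2 s2 t2 a b)
    (huB : u ∉ ({s1, t1} ∩ {s2, t2} : Set V))
    (hu1 : u ∈ P1) (hu2 : u ∈ P2)
    (h1 : P1.idxOf b ≤ P1.idxOf u) (h2 : P2.idxOf b ≤ P2.idxOf u) : u = b := by
  obtain ⟨-, -, -, -, -, hsuf⟩ := hc
  have hm1 : u ∈ subpath P1 b t1 := by
    refine (mem_subpath_iff hnd1).mpr ⟨hu1, h1, ?_⟩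
    rw [idxOf_last hnd1 hl1]; have := idxOf_lt hu1; omega
  have hm2 : u ∈ subpath P2 b t2 := by
    refine (mem_subpath_iff hnd2).mpr ⟨hu2, h2, ?_⟩
    rw [idxOf_last hnd2 hl2]; have := idxOf_lt hu2; omega
  have := hsuf u hm1 hm2
  obtain ⟨hl, hr⟩ := this
  simp only [Set.mem_insert_iff, Set.mem_singleton_iff] at hl hr
  rcases hl with rfl | rfl
  · rfl
  · rcases hr with rfl | rfl
    · rfl
    · exact absurd ⟨by simp, by simp⟩ huB

theorem concordant_swap {p1 : List V} {x1 y1 : V} {p2 : List V} {x2 y2 a b : V}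
    (h : ConcordantPair p1 x1 y1 p2 x2 y2 a b) : ConcordantPair p2 x2 y2 p1 x1 y1 a b := by
  obtain ⟨h1, h2, h3, h4, h5, h6⟩ := h
  refine ⟨by rwa [Set.inter_comm], by rwa [Set.inter_comm], h4, h3, ?_, ?_⟩
  · intro u hu2 hu1; rw [Set.inter_comm]; exact h5 u hu1 hu2
  · intro u hu2 hu1; rw [Set.inter_comm]; exact h6 u hu1 hu2

theorem key_lemma {E : V → V → Prop} {ℓ : V → V → ℝ} (hG : NoNonposCycle E ℓ)
    {s1 t1 s2 t2 v w v' w' : V} {P1 P2 : List V}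
    (h1 : IsShortestPath E ℓ P1 s1 t1) (h2 : IsShortestPath E ℓ P2 s2 t2)
    (hc : ConcordantPair P1 s1 t1 P2 s2 t2 v w)
    (hc' : ConcordantPair P1 s1 t1 P2 s2 t2 v' w')
    (hne : (v, w) ≠ (v', w'))
    {u : V} (hu1 : u ∈ subpath P1 v w) (hu2 : u ∈ subpath P1 v' w') : False := by
  obtain ⟨⟨⟨hne1, hnd1, hch1⟩, hh1, hl1⟩, -⟩ := id h1
  obtain ⟨⟨⟨hne2, hnd2, hch2⟩, hh2, hl2⟩, -⟩ := id h2
  obtain ⟨hvB, hwB, ⟨hv1, hw1, hvw1⟩, ⟨hv2, hw2, hvw2⟩, -, -⟩ := id hc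
  obtain ⟨hvB', hwB', ⟨hv1', hw1', hvw1'⟩, ⟨hv2', hw2', hvw2'⟩, -, -⟩ := id hc'
  obtain ⟨huP, huv, huw⟩ := (mem_subpath_iff hnd1).mp hu1
  obtain ⟨-, huv', huw'⟩ := (mem_subpath_iff hnd1).mp hu2
  have hvv' : v = v' := by
    by_cases hveq : v = v'
    · exact hveq
    rcases le_total (P1.idxOf v) (P1.idxOf v') with hA | hA
    · rcases le_total (P2.idxOf v) (P2.idxOf v') with hB | hB
      · exact pre_lemma hnd1 hnd2 hh1 hh2 hc' hvB hv1 hv2 hA hB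
      · exact absurd (cross_later hG h1 h2 hv1 hv1' hw1 hv2 hv2' hw2 hA hB
          (le_trans huv' huw) hvw2 hveq) not_false
    · rcases le_total (P2.idxOf v') (P2.idxOf v) with hB | hB
      · exact (pre_lemma hnd1 hnd2 hh1 hh2 hc hvB' hv1' hv2' hA hB).symm
      · exact absurd (cross_later hG h1 h2 hv1' hv1 hw1' hv2' hv2 hw2' hA hB
          (le_trans huv huw') hvw2' (Ne.symm hveq)) not_false
  subst hvv'
  have hww' : w = w' := by
    by_cases hweq : w = w'
    · exact hweq
    rcases le_total (P1.idxOf w) (P1.idxOf w') with hA | hA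
    · rcases le_total (P2.idxOf w) (P2.idxOf w') with hB | hB
      · exact (suf_lemma hnd1 hnd2 hl1 hl2 hc hwB' hw1' hw2' hA hB).symm
      · exact absurd (cross_earlier hG h1 h2 hw1 hw1' hv1 hw2 hw2' hv2 hA hB
          hvw1 hvw2' hweq) not_false
    · rcases le_total (P2.idxOf w') (P2.idxOf w) with hB | hB
      · exact suf_lemma hnd1 hnd2 hl1 hl2 hc' hwB hw1 hw2 hA hB
      · exact absurd (cross_earlier hG h1 h2 hw1' hw1 hv1 hw2' hw2 hv2 hA hB
          hvw1' hvw2 (Ne.symm hweq)) not_false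
  exact hne (by rw [hww'])

/-- Distinct concordant pairs `(v, w)` and `(v', w')` for a
pair `(P1, P2) ∈ Π(s1, t1) × Π(s2, t2)` have vertex-disjoint subpaths on `P1`
and vertex-disjoint subpaths on `P2`. -/
theorem concordant_pairs_vertex_disjoint
    (hG : NoNonposCycle E ℓ) (s1 t1 s2 t2 v w v' w' : V) (P1 P2 : List V)
    (h1 : IsShortestPath E ℓ P1 s1 t1) (h2 : IsShortestPath E ℓ P2 s2 t2)
    (hc : ConcordantPair P1 s1 t1 P2 s2 t2 v w)
    (hc' : ConcordantPair P1 s1 t1 P2 s2 t2 v' w')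
    (hne : (v, w) ≠ (v', w')) :
    (∀ u, u ∈ subpath P1 v w → u ∉ subpath P1 v' w') ∧
    (∀ u, u ∈ subpath P2 v w → u ∉ subpath P2 v' w') := by
  constructor
  · intro u hu1 hu2
    exact key_lemma hG h1 h2 hc hc' hne hu1 hu2
  · intro u hu1 hu2
    exact key_lemma hG h2 h1 (concordant_swap hc) (concordant_swap hc') hne hu1 hu2

end DSP
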